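/- Given a convex set G ⊆ ℝᵈ with 0 ∉ G, there exists a linear extended function f : ℝᵈ → ℝ̄ with f(x) = -∞ for all x ∈ G. -/

import Mathlib

/-- A *linear extended function*: scaling and additivity whenever the sum is legal. -/
def IsLinExt {E : Type*} [AddCommGroup E] [Module ℝ E] (f : E → EReal) : Prop :=
  (∀ (α : ℝ) (x : E), f (α • x) = (α : EReal) * f x) ∧
  (∀ x x' : E, ¬ ((f x = ⊤ ∧ f x' = ⊥) ∨ (f x = ⊥ ∧ f x' = ⊤)) →
    f (x + x') = f x + f x')

/-- An *affine extended function*: a horizontally and vertically shifted linear extended fn. -/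
def IsAffExt {E : Type*} [AddCommGroup E] [Module ℝ E] (h : E → EReal) : Prop :=
  ∃ (f : E → EReal) (x₀ : E) (β : ℝ), IsLinExt f ∧ ∀ x, h x = f (x - x₀) + (β : EReal)

lemma isLinExt_zero {E : Type*} [AddCommGroup E] [Module ℝ E] :
    IsLinExt (fun (_ : E) => (0 : EReal)) := by
  refine ⟨fun α x => ?_, fun x x' _ => ?_⟩
  · simp
  · simp

/-- Combining the sign of a linear functional with a linear extended function on its kernel. -/
lemma isLinExt_step {E : Type*} [AddCommGroup E] [Module ℝ E] (ℓ : E →ₗ[ℝ] ℝ)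
    (g : E → EReal) (hg : IsLinExt g) :
    IsLinExt (fun x => if 0 < ℓ x then (⊥ : EReal) else if ℓ x < 0 then ⊤ else g x) := by
  have hg0 : g 0 = 0 := by simpa using hg.1 0 0
  set F : E → EReal := fun x => if 0 < ℓ x then ⊥ else if ℓ x < 0 then ⊤ else g x with hF
  have hFpos : ∀ x, 0 < ℓ x → F x = ⊥ := fun x hx => by simp [hF, hx]
  have hFneg : ∀ x, ℓ x < 0 → F x = ⊤ := fun x hx => by simp [hF, hx, not_lt.2 hx.le]
  have hFzero : ∀ x, ℓ x = 0 → F x = g x := fun x hx => by simp [hF, hx]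
  constructor
  · intro α x
    have hax : ℓ (α • x) = α * ℓ x := by simp
    rcases lt_trichotomy α 0 with hα | hα | hα
    · rcases lt_trichotomy (ℓ x) 0 with hx | hx | hx
      · rw [hFpos _ (by rw [hax]; nlinarith), hFneg _ hx, EReal.coe_mul_top_of_neg hα]
      · rw [hFzero _ (by rw [hax, hx, mul_zero]), hFzero _ hx, hg.1]
      · rw [hFneg _ (by rw [hax]; nlinarith), hFpos _ hx, EReal.coe_mul_bot_of_neg hα]
    · subst hα
      rw [zero_smul, hFzero 0 (by simp), hg0, EReal.coe_zero, zero_mul]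
    · rcases lt_trichotomy (ℓ x) 0 with hx | hx | hx
      · rw [hFneg _ (by rw [hax]; nlinarith), hFneg _ hx, EReal.coe_mul_top_of_pos hα]
      · rw [hFzero _ (by rw [hax, hx, mul_zero]), hFzero _ hx, hg.1]
      · rw [hFpos _ (by rw [hax]; nlinarith), hFpos _ hx, EReal.coe_mul_bot_of_pos hα]
  · intro x x' h
    have hsum : ℓ (x + x') = ℓ x + ℓ x' := map_add ℓ x x'
    rcases lt_trichotomy (ℓ x) 0 with hx | hx | hx <;>
      rcases lt_trichotomy (ℓ x') 0 with hx' | hx' | hx'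
    · -- (−,−)
      rw [hFneg (x + x') (by rw [hsum]; linarith), hFneg _ hx, hFneg _ hx']
      rfl
    · -- (−,0)
      rw [hFneg (x + x') (by rw [hsum, hx']; simpa), hFneg _ hx, hFzero _ hx']
      have hb : g x' ≠ ⊥ := fun hb => h (Or.inl ⟨hFneg _ hx, (hFzero _ hx').trans hb⟩)
      rw [EReal.top_add_of_ne_bot hb]
    · -- (−,+): excluded
      exact absurd (Or.inl ⟨hFneg _ hx, hFpos _ hx'⟩) h
    · -- (0,−)
      rw [hFneg (x + x') (by rw [hsum, hx]; simpa), hFzero _ hx, hFneg _ hx']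
      have hb : g x ≠ ⊥ := fun hb => h (Or.inr ⟨(hFzero _ hx).trans hb, hFneg _ hx'⟩)
      rw [EReal.add_top_of_ne_bot hb]
    · -- (0,0)
      rw [hFzero (x + x') (by rw [hsum, hx, hx']; ring), hFzero _ hx, hFzero _ hx']
      refine hg.2 x x' fun hc => h ?_
      rcases hc with ⟨h1, h2⟩ | ⟨h1, h2⟩
      · exact Or.inl ⟨(hFzero _ hx).trans h1, (hFzero _ hx').trans h2⟩
      · exact Or.inr ⟨(hFzero _ hx).trans h1, (hFzero _ hx').trans h2⟩
    · -- (0,+)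
      rw [hFpos (x + x') (by rw [hsum, hx]; linarith), hFzero _ hx, hFpos _ hx',
        EReal.add_bot]
    · -- (+,−): excluded
      exact absurd (Or.inr ⟨hFpos _ hx, hFneg _ hx'⟩) h
    · -- (+,0)
      rw [hFpos (x + x') (by rw [hsum, hx']; simpa), hFpos _ hx, EReal.bot_add]
    · -- (+,+)
      rw [hFpos (x + x') (by rw [hsum]; linarith), hFpos _ hx, EReal.bot_add]

open Module in
/-- Key induction: if `G` is convex, misses `0`, and lies in a submodule `p` of dimension
at most `n`, then there is a linear extended function equal to `⊥` on `G`. -/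
lemma aux_linext (d : ℕ) : ∀ (n : ℕ) (p : Submodule ℝ (Fin d → ℝ)) (G : Set (Fin d → ℝ)),
    finrank ℝ p ≤ n → Convex ℝ G → (0 : Fin d → ℝ) ∉ G → G ⊆ (p : Set (Fin d → ℝ)) →
    ∃ f : (Fin d → ℝ) → EReal, IsLinExt f ∧ ∀ x ∈ G, f x = ⊥ := by
  intro n
  induction n with
  | zero =>
    intro p G hrank hG h0 hGp
    rcases G.eq_empty_or_nonempty with rfl | ⟨x, hx⟩
    · exact ⟨fun _ => 0, isLinExt_zero, by simp⟩
    · exfalso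
      have hp : p = ⊥ := Submodule.finrank_eq_zero.1 (Nat.le_zero.1 hrank)
      have : x = 0 := by simpa [hp] using hGp hx
      exact h0 (this ▸ hx)
  | succ n ih =>
    intro p G hrank hG h0 hGp
    rcases G.eq_empty_or_nonempty with rfl | ⟨x₀, hx₀⟩
    · exact ⟨fun _ => 0, isLinExt_zero, by simp⟩
    -- work inside the submodule p
    set Gp : Set ↥p := ((↑) : ↥p → (Fin d → ℝ)) ⁻¹' G with hGpdef
    have hGpc : Convex ℝ Gp := hG.linear_preimage p.subtype
    set C : Set ↥p := (hGpc.toCone Gp : Set ↥p) with hCdef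
    have hC : Convex ℝ C := (hGpc.toCone Gp).convex
    have hGpC : Gp ⊆ C := hGpc.subset_toCone
    have h0C : (0 : ↥p) ∉ C := by
      intro h
      obtain ⟨c, hc, hcy⟩ := hGpc.mem_toCone'.1 h
      rw [smul_zero] at hcy
      exact h0 (by simpa [hGpdef] using hcy)
    have hCne : C.Nonempty := ⟨⟨x₀, hGp hx₀⟩, hGpC hx₀⟩
    -- the closure of the cone C is not everything
    have hclos : closure C ≠ Set.univ := by
      intro hcl
      have hspan : affineSpan ℝ C = ⊤ := by
        rw [← AffineSubspace.coe_eq_univ_iff]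
        have hclosed : IsClosed ((affineSpan ℝ C : AffineSubspace ℝ ↥p) : Set ↥p) :=
          (affineSpan ℝ C).closed_of_finiteDimensional
        have : closure C ⊆ (affineSpan ℝ C : Set ↥p) :=
          hclosed.closure_subset_iff.2 (subset_affineSpan ℝ C)
        exact Set.eq_univ_of_univ_subset (hcl ▸ this)
      obtain ⟨w, hw⟩ := hC.interior_nonempty_iff_affineSpan_eq_top.2 hspan
      have hnw : (-w) ∈ closure C := by rw [hcl]; trivial
      have h02 : (0 : ↥p) ∈ interior C := by
        have := hC.combo_interior_closure_mem_interior hw hnw (by norm_num : (0:ℝ) < 1/2)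
          (by norm_num : (0:ℝ) ≤ 1/2) (by norm_num)
        simpa [smul_neg] using this
      exact h0C (interior_subset h02)
    obtain ⟨y, hy⟩ := Set.ne_univ_iff_exists_notMem _ |>.1 hclos
    obtain ⟨φ, u, hφu, huy⟩ :=
      geometric_hahn_banach_closed_point hC.closure isClosed_closure hy
    -- φ is nonpositive on the cone C
    have hφle : ∀ c ∈ C, φ c ≤ 0 := by
      intro c hc
      by_contra hpos
      push_neg at hpos
      have ht : 0 < (|u| + 1) / φ c := by positivity
      have hmem : ((|u| + 1) / φ c) • c ∈ C := (hGpc.toCone Gp).smul_mem ht hc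
      have := hφu _ (subset_closure hmem)
      rw [map_smul, smul_eq_mul, div_mul_cancel₀ _ (ne_of_gt hpos)] at this
      have : |u| + 1 < |u| := lt_of_lt_of_le this (le_abs_self u)
      linarith
    -- φ is not identically zero
    have hφne : ∃ z : ↥p, φ z ≠ 0 := by
      obtain ⟨c₀, hc₀⟩ := hCne
      by_cases h : φ y = 0
      · refine ⟨c₀, fun hz => ?_⟩
        have := hφu c₀ (subset_closure hc₀)
        rw [hz] at this
        rw [h] at huy
        linarith
      · exact ⟨y, h⟩
    obtain ⟨z, hz⟩ := hφne
    -- extend -φ to a linear functional ℓ on the whole space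
    obtain ⟨q, hq⟩ := p.exists_isCompl
    set ℓ : (Fin d → ℝ) →ₗ[ℝ] ℝ :=
      (-(φ.toLinearMap)) ∘ₗ (p.linearProjOfIsCompl q hq) with hℓdef
    have hℓmem : ∀ (w : ↥p), ℓ (w : Fin d → ℝ) = -φ w := by
      intro w
      simp [hℓdef, Submodule.linearProjOfIsCompl_apply_left hq w]
      exact congrArg φ (Submodule.linearProjOfIsCompl_apply_left hq w)
    have hℓG : ∀ x ∈ G, 0 ≤ ℓ x := by
      intro x hx
      have hxp : x ∈ p := hGp hx
      have : ℓ x = -φ ⟨x, hxp⟩ := hℓmem ⟨x, hxp⟩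
      rw [this]
      have : φ ⟨x, hxp⟩ ≤ 0 := hφle _ (hGpC hx)
      linarith
    -- the smaller submodule
    set p' : Submodule ℝ (Fin d → ℝ) := p ⊓ LinearMap.ker ℓ with hp'def
    have hzℓ : ℓ (z : Fin d → ℝ) ≠ 0 := by rw [hℓmem z]; simpa using hz
    have hlt : p' < p := by
      rcases lt_or_eq_of_le (inf_le_left : p' ≤ p) with h | h
      · exact h
      · exfalso
        apply hzℓ
        have hzp' : (z : Fin d → ℝ) ∈ p ⊓ LinearMap.ker ℓ := by rw [h]; exact z.2
        exact (Submodule.mem_inf.1 hzp').2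
    have hrank' : finrank ℝ p' ≤ n := by
      have := Submodule.finrank_lt_finrank_of_lt hlt
      omega
    -- the part of G in the kernel
    set G' : Set (Fin d → ℝ) := G ∩ (LinearMap.ker ℓ : Set (Fin d → ℝ)) with hG'def
    have hG'conv : Convex ℝ G' := hG.inter (LinearMap.ker ℓ).convex
    have h0G' : (0 : Fin d → ℝ) ∉ G' := fun h => h0 h.1
    have hG'p' : G' ⊆ (p' : Set (Fin d → ℝ)) := by
      intro x hx
      exact Submodule.mem_inf.2 ⟨hGp hx.1, hx.2⟩
    obtain ⟨g, hgLin, hgbot⟩ := ih p' G' hrank' hG'conv h0G' hG'p'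
    refine ⟨fun x => if 0 < ℓ x then ⊥ else if ℓ x < 0 then ⊤ else g x,
      isLinExt_step ℓ g hgLin, ?_⟩
    intro x hx
    show (if 0 < ℓ x then (⊥ : EReal) else if ℓ x < 0 then ⊤ else g x) = ⊥
    rcases lt_or_eq_of_le (hℓG x hx) with hpos | heq
    · rw [if_pos hpos]
    · have hx0 : ℓ x = 0 := heq.symm
      rw [hx0]
      norm_num
      exact hgbot x ⟨hx, by simp [LinearMap.mem_ker, hx0]⟩

theorem stmt_10 (d : ℕ) (G : Set (Fin d → ℝ)) (hG : Convex ℝ G) (h0 : (0 : Fin d → ℝ) ∉ G) :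
    ∃ f : (Fin d → ℝ) → EReal, IsLinExt f ∧ ∀ x ∈ G, f x = ⊥ := by
  exact aux_linext d (Module.finrank ℝ (Fin d → ℝ)) ⊤ G
    (le_of_eq (by simp)) hG h0 (by simp)
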